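/- Let (Ξ, 𝔐) be a measurable space in which singletons are measurable, μ a probability measure on Ξ, p : Ξ → ℝ measurable, α β ∈ ℝ, and g : X → Ξ → (Fin m → ℝ). Define M(x) = {ξ | ∀ j, g x ξ j ≤ 0}, X_P(α) = {x | ∀ ξ, α ≤ p ξ → ξ ∈ M(x)}, and X_C = {x | μ (M(x)) ≥ ENNReal.ofReal (1 − β)}. Assume: (i) μ {ξ | α ≤ p ξ} = ENNReal.ofReal (1 − β); (ii) for every x ∈ X_C and all ξᵃ ∈ M(x), ξᵇ ∉ M(x), one has p ξᵇ ≤ p ξᵃ; (iii) every ξ with α ≤ p ξ is an atom, i.e. μ {ξ} > 0. Then X_P(α) = X_C. -/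

import Mathlib

open MeasureTheory

/-- Under the condition μ{ξ | α ≤ p ξ} = 1 - β, the ordering condition that
every satisfied realization is at least as probable as every violated one,
and the atomicity of probable realizations, the PECO and CCO feasible sets
coincide: X_P(α) = X_C. -/
theorem peco_eq_cco {Ξ X : Type*} {m : ℕ} [MeasurableSpace Ξ]
    [MeasurableSingletonClass Ξ]
    (μ : Measure Ξ) [IsProbabilityMeasure μ]
    (p : Ξ → ℝ) (hp : Measurable p) (α β : ℝ)
    (g : X → Ξ → Fin m → ℝ)
    (h1 : μ {ξ | α ≤ p ξ} = ENNReal.ofReal (1 - β))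
    (h2 : ∀ x : X, μ {ξ | ∀ j : Fin m, g x ξ j ≤ 0} ≥ ENNReal.ofReal (1 - β) →
      ∀ ξa ∈ {ξ | ∀ j : Fin m, g x ξ j ≤ 0},
        ∀ ξb ∉ {ξ | ∀ j : Fin m, g x ξ j ≤ 0}, p ξb ≤ p ξa)
    (h3 : ∀ ξ : Ξ, α ≤ p ξ → 0 < μ {ξ}) :
    {x : X | ∀ ξ : Ξ, α ≤ p ξ → ξ ∈ {ξ | ∀ j : Fin m, g x ξ j ≤ 0}} =
      {x : X | μ {ξ | ∀ j : Fin m, g x ξ j ≤ 0} ≥ ENNReal.ofReal (1 - β)} := by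
  ext x
  simp only [Set.mem_setOf_eq]
  constructor
  · intro hx
    calc ENNReal.ofReal (1 - β) = μ {ξ | α ≤ p ξ} := h1.symm
    _ ≤ μ {ξ | ∀ j : Fin m, g x ξ j ≤ 0} := measure_mono (fun ξ hξ => hx ξ hξ)
  · intro hx ξ hξ
    by_contra hξM
    have hsub : {ξ | ∀ j : Fin m, g x ξ j ≤ 0} ∪ {ξ} ⊆ {ξ | α ≤ p ξ} := by
      rintro ζ (hζ | hζ)
      · exact le_trans hξ (h2 x hx ζ hζ ξ hξM)
      · rw [Set.mem_singleton_iff] at hζ; subst hζ; exact hξ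
    have hdisj : Disjoint {ξ' | ∀ j : Fin m, g x ξ' j ≤ 0} ({ξ} : Set Ξ) := by
      rw [Set.disjoint_singleton_right]; exact hξM
    have hle : μ ({ξ' | ∀ j : Fin m, g x ξ' j ≤ 0} ∪ {ξ}) ≤ ENNReal.ofReal (1 - β) := by
      rw [← h1]; exact measure_mono hsub
    rw [measure_union hdisj (measurableSet_singleton ξ)] at hle
    have h4 := h3 ξ hξ
    have : ENNReal.ofReal (1 - β) + μ {ξ} ≤ ENNReal.ofReal (1 - β) + 0 := by
      rw [add_zero]; exact le_trans (add_le_add_left hx _) hle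
    have h5 := ENNReal.le_of_add_le_add_left (a := ENNReal.ofReal (1 - β))
      ENNReal.ofReal_ne_top this
    exact absurd h5 (not_le.mpr h4)
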